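/- arXiv:2109.11984 — 6 statements merged into one kernel-verified Lean document; each statement's English description precedes it below -/
import Mathlib

section
/- Let R > 0 and n > 0. Define on the domain {(p, ρ, s, θ) : ρ > 0, θ > 0} the functions F(p, ρ, s, θ) = p − Rρθ and G(p, ρ, s, θ) = s − R((n/2) ln θ − ln ρ + n/2). Then the Poisson bracket [F, G] := F_s G_θ − F_θ G_s + ρ²(F_ρ G_p − F_p G_ρ) associated with the symplectic form Ω = ds ∧ dθ + ρ⁻² dρ ∧ dp vanishes identically on this domain. -/
/-- For the ideal-gas state equations F(p,ρ,s,θ) = p − Rρθ and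
G(p,ρ,s,θ) = s − R((n/2)ln θ − ln ρ + n/2), the Poisson bracket
[F,G] = F_s G_θ − F_θ G_s + ρ²(F_ρ G_p − F_p G_ρ) associated with the
symplectic form Ω = ds ∧ dθ + ρ⁻² dρ ∧ dp vanishes on {ρ > 0, θ > 0}. -/
theorem stmt2 (R n : ℝ) (hR : 0 < R) (hn : 0 < n)
    (F G : ℝ → ℝ → ℝ → ℝ → ℝ)
    (hF : ∀ p ρ s θ : ℝ, F p ρ s θ = p - R * ρ * θ)
    (hG : ∀ p ρ s θ : ℝ,
      G p ρ s θ = s - R * ((n / 2) * Real.log θ - Real.log ρ + n / 2)) :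
    ∀ p ρ s θ : ℝ, 0 < ρ → 0 < θ →
      (deriv (fun s' => F p ρ s' θ) s) * (deriv (fun θ' => G p ρ s θ') θ)
        - (deriv (fun θ' => F p ρ s θ') θ) * (deriv (fun s' => G p ρ s' θ) s)
        + ρ ^ 2 * ((deriv (fun ρ' => F p ρ' s θ) ρ) * (deriv (fun p' => G p' ρ s θ) p)
          - (deriv (fun p' => F p' ρ s θ) p) * (deriv (fun ρ' => G p ρ' s θ) ρ)) = 0 := by
  intro p ρ s θ hρ hθ
  simp only [hF, hG]
  have h1 : deriv (fun s' : ℝ => p - R * ρ * θ) s = 0 := by simp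
  have h2 : deriv (fun θ' : ℝ => p - R * ρ * θ') θ = -(R * ρ) := by
    simp [deriv_sub, mul_comm]
  have h3 : deriv (fun s' : ℝ => s' - R * ((n / 2) * Real.log θ - Real.log ρ + n / 2)) s = 1 := by
    simp
  have h4 : deriv (fun θ' : ℝ => s - R * ((n / 2) * Real.log θ' - Real.log ρ + n / 2)) θ
      = -(R * ((n / 2) / θ)) := by
    have := ((((Real.hasDerivAt_log hθ.ne').const_mul (n/2)).sub_const
      (Real.log ρ)).add_const (n/2)).const_mul R
    simpa [div_eq_mul_inv] using (((this.const_sub s)).deriv)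
  have h5 : deriv (fun ρ' : ℝ => p - R * ρ' * θ) ρ = -(R * θ) := by
    have : (fun ρ' : ℝ => p - R * ρ' * θ) = fun ρ' => p - (R * θ) * ρ' := by
      funext x; ring
    rw [this]
    simp [mul_comm]
  have h6 : deriv (fun p' : ℝ => s - R * ((n / 2) * Real.log θ - Real.log ρ + n / 2)) p = 0 := by
    simp
  have h7 : deriv (fun p' : ℝ => p' - R * ρ * θ) p = 1 := by simp
  have h8 : deriv (fun ρ' : ℝ => s - R * ((n / 2) * Real.log θ - Real.log ρ' + n / 2)) ρ
      = R / ρ := by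
    have h := ((((Real.hasDerivAt_log hρ.ne').const_sub ((n/2) * Real.log θ)).add_const
      (n/2)).const_mul R).const_sub s
    rw [h.deriv]; field_simp
  rw [h1, h2, h3, h4, h5, h6, h7, h8]
  field_simp
  ring
end

section
/- Let R > 0, k > 0, n > 0, ω > 0, c₁ ≠ 0 and c₂ > 0 be real constants, and let Φ(x, y) = (n/2) ln y − ln x be the ideal-gas Planck potential. On the domain {(x, y) : x > ω/√c₂, y > 0}, the functions L(x, y) = 0, M(x, y) = c₁ x^{1 + 2/n}, K(x, y) = √(c₂x² − ω²), N(x, y) = −(2y/n)√(c₂x² − ω²) satisfy the four equations of the quotient system E_q: (i) xK M_x − N M_y + L N_x + M(N_y − K) = 0; (ii) Rxy(xK(Φ_x + yΦ_xy) − N(2Φ_y + yΦ_yy)) + k(L M_x + M M_y) = 0; (iii) RL·B + xK² L_x − KN L_y − (xKM + LN) K_y − 3LK² − ω²L = 0, where B = xy(Φ_xxx L² + 2Φ_xxy LM + Φ_xyy M²) + (xyL L_x + xyM L_y + 2xLM + 3yL²)Φ_xx + (xyL M_x + M(xy M_y + 2xM + 3yL))Φ_xy + (2yL L_x + 2yM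 L_y + xL M_x + M(x M_y + 3L))Φ_x; (iv) x(M K_y − K L_x + L K_x) + N L_y + 2KL = 0. -/
/-- Partial derivative in the first variable. -/
noncomputable def pdx (f : ℝ → ℝ → ℝ) : ℝ → ℝ → ℝ :=
  fun x y => deriv (fun x' => f x' y) x

/-- Partial derivative in the second variable. -/
noncomputable def pdy (f : ℝ → ℝ → ℝ) : ℝ → ℝ → ℝ :=
  fun x y => deriv (fun y' => f x y') y

/-- The constant-type solution L = 0, M = c₁x^(1+2/n), K = √(c₂x²−ω²),
N = −(2y/n)√(c₂x²−ω²) of the quotient system E_q of the Euler system on the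
curve h(a) = λa² for the ideal-gas Planck potential Φ = (n/2)ln y − ln x,
on the domain {x > ω/√c₂, y > 0}. -/
theorem stmt8 (R k n ω c₁ c₂ : ℝ) (hR : 0 < R) (hk : 0 < k) (hn : 0 < n)
    (hω : 0 < ω) (hc₁ : c₁ ≠ 0) (hc₂ : 0 < c₂)
    (Φ L M K N : ℝ → ℝ → ℝ)
    (hΦ : ∀ x y : ℝ, Φ x y = n / 2 * Real.log y - Real.log x)
    (hL : ∀ x y : ℝ, L x y = 0)
    (hM : ∀ x y : ℝ, M x y = c₁ * x ^ (1 + 2 / n))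
    (hK : ∀ x y : ℝ, K x y = Real.sqrt (c₂ * x ^ 2 - ω ^ 2))
    (hN : ∀ x y : ℝ, N x y = -(2 * y / n) * Real.sqrt (c₂ * x ^ 2 - ω ^ 2)) :
    ∀ x y : ℝ, ω / Real.sqrt c₂ < x → 0 < y →
      -- (i)
      (x * K x y * pdx M x y - N x y * pdy M x y + L x y * pdx N x y
        + M x y * (pdy N x y - K x y) = 0)
      ∧
      -- (ii)
      (R * x * y * (x * K x y * (pdx Φ x y + y * pdy (pdx Φ) x y)
          - N x y * (2 * pdy Φ x y + y * pdy (pdy Φ) x y))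
        + k * (L x y * pdx M x y + M x y * pdy M x y) = 0)
      ∧
      -- (iii)
      (R * L x y *
        (x * y * (pdx (pdx (pdx Φ)) x y * (L x y) ^ 2
            + 2 * pdy (pdx (pdx Φ)) x y * (L x y) * (M x y)
            + pdy (pdy (pdx Φ)) x y * (M x y) ^ 2)
          + (x * y * L x y * pdx L x y + x * y * M x y * pdy L x y
              + 2 * x * L x y * M x y + 3 * y * (L x y) ^ 2) * pdx (pdx Φ) x y
          + (x * y * L x y * pdx M x y
              + M x y * (x * y * pdy M x y + 2 * x * M x y + 3 * y * L x y))
            * pdy (pdx Φ) x y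
          + (2 * y * L x y * pdx L x y + 2 * y * M x y * pdy L x y
              + x * L x y * pdx M x y + M x y * (x * pdy M x y + 3 * L x y))
            * pdx Φ x y)
        + x * (K x y) ^ 2 * pdx L x y - K x y * N x y * pdy L x y
        - (x * K x y * M x y + L x y * N x y) * pdy K x y
        - 3 * L x y * (K x y) ^ 2 - ω ^ 2 * L x y = 0)
      ∧
      -- (iv)
      (x * (M x y * pdy K x y - K x y * pdx L x y + L x y * pdx K x y)
        + N x y * pdy L x y + 2 * K x y * L x y = 0) := by
  intro x y hx hy
  have hsx : 0 < Real.sqrt c₂ := Real.sqrt_pos.mpr hc₂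
  have hx0 : 0 < x := lt_trans (div_pos hω hsx) hx
  have hy0 : y ≠ 0 := hy.ne'
  set s := Real.sqrt (c₂ * x ^ 2 - ω ^ 2) with hs
  have hLx : pdx L x y = 0 := by simp [pdx, hL]
  have hLy : pdy L x y = 0 := by simp [pdy, hL]
  have hMy : pdy M x y = 0 := by simp [pdy, hM]
  have hKy : pdy K x y = 0 := by simp [pdy, hK]
  have hMx : pdx M x y = c₁ * ((1 + 2 / n) * x ^ (1 + 2 / n - 1)) := by
    have h := ((Real.hasDerivAt_rpow_const (p := 1 + 2 / n)
      (Or.inl hx0.ne')).const_mul c₁).deriv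
    simp only [pdx, hM]
    exact h
  have hNy : pdy N x y = -(2 / n) * s := by
    have h3 : (fun y' : ℝ => N x y') = fun y' => (-(2 / n) * s) * y' := by
      funext y'; rw [hN]; ring
    have h : HasDerivAt (fun y' : ℝ => -(2 / n) * s * y') (-(2 / n) * s) y := by
      simpa using (hasDerivAt_id y).const_mul (-(2 / n) * s)
    simp only [pdy, h3]
    exact h.deriv
  have hΦx : ∀ y' : ℝ, pdx Φ x y' = -x⁻¹ := by
    intro y'
    have h : HasDerivAt (fun x' : ℝ => n / 2 * Real.log y' - Real.log x')
        (-(x⁻¹)) x := (Real.hasDerivAt_log hx0.ne').const_sub (n / 2 * Real.log y')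
    simp only [pdx, hΦ]
    exact h.deriv
  have hΦxy : pdy (pdx Φ) x y = 0 := by
    have hc : (fun y' : ℝ => pdx Φ x y') = fun _ => -x⁻¹ := funext hΦx
    simp only [pdy]
    rw [hc]
    exact deriv_const y _
  have hΦy : ∀ y' : ℝ, y' ≠ 0 → pdy Φ x y' = n / 2 * y'⁻¹ := by
    intro y' hy'
    have h : HasDerivAt (fun y'' : ℝ => n / 2 * Real.log y'' - Real.log x)
        (n / 2 * y'⁻¹) y' := ((Real.hasDerivAt_log hy').const_mul (n / 2)).sub_const _
    simp only [pdy, hΦ]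
    exact h.deriv
  have hΦyy : pdy (pdy Φ) x y = n / 2 * (-(y ^ 2)⁻¹) := by
    have hev : (fun y' : ℝ => pdy Φ x y') =ᶠ[nhds y] fun y' => n / 2 * y'⁻¹ := by
      filter_upwards [eventually_ne_nhds hy0] with y' hy' using hΦy y' hy'
    have hdef : pdy (pdy Φ) x y = deriv (fun y' => pdy Φ x y') y := rfl
    rw [hdef, hev.deriv_eq]
    exact ((hasDerivAt_inv hy0).const_mul (n / 2)).deriv
  refine ⟨?_, ?_, ?_, ?_⟩
  · simp only [hL, hM, hK, hN, hMx, hMy, hNy, ← hs]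
    have hAB : x ^ (1 + 2 / n - 1) * x = x ^ (1 + 2 / n) := by
      rw [← Real.rpow_add_one hx0.ne']; congr 1; ring
    linear_combination (c₁ * s * (1 + 2 / n)) * hAB
  · rw [hL, hM, hK, hN, hMx, hMy, hΦx y, hΦxy, hΦy y hy0, hΦyy, ← hs]
    field_simp
    ring
  · rw [hL, hLx, hLy, hKy]
    ring
  · rw [hL, hLx, hLy, hKy]
    ring
end

section
/- Let R > 0, k > 0, n > 0 with n ≠ 2, ω > 0, c₁ ≠ 0 and c₂ > 0 be real constants, set m = 2n/(n − 2), and let Φ(x, y) = (n/2) ln y − ln x be the ideal-gas Planck potential. On a domain of points (x, y) with x > 0, y > 0 and c₂(x/y)^m − ω² > 0, the functions L(x, y) = c₁(x/y)^m, M(x, y) = (y/x)L(x, y), K(x, y) = √(c₂(x/y)^m − ω²), N(x, y) = −(2y/n)K(x, y) satisfy the four equations of the quotient system E_q: (i) xK M_x − N M_y + L N_x + M(N_y − K) = 0; (ii) Rxy(xK(Φ_x + yΦ_xy) − N(2Φ_y + yΦ_yy)) + k(L M_x + M M_y) = 0; (iii) RL·B + xK² L_x − KN L_y − (xKM + LN)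 K_y − 3LK² − ω²L = 0, where B = xy(Φ_xxx L² + 2Φ_xxy LM + Φ_xyy M²) + (xyL L_x + xyM L_y + 2xLM + 3yL²)Φ_xx + (xyL M_x + M(xy M_y + 2xM + 3yL))Φ_xy + (2yL L_x + 2yM L_y + xL M_x + M(x M_y + 3L))Φ_x; (iv) x(M K_y − K L_x + L K_x) + N L_y + 2KL = 0. -/
set_option maxHeartbeats 1600000 in
/-- The constant-type solution L = c₁(x/y)^m, M = (y/x)L,
K = √(c₂(x/y)^m − ω²), N = −(2y/n)K (with m = 2n/(n−2)) of the quotient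
system E_q of the Euler system on the curve h(a) = λa² for the ideal-gas
Planck potential Φ = (n/2)ln y − ln x, on a domain where x > 0, y > 0 and
c₂(x/y)^m − ω² > 0. -/
theorem stmt9 (R k n ω c₁ c₂ m : ℝ) (hR : 0 < R) (hk : 0 < k) (hn : 0 < n)
    (hn2 : n ≠ 2) (hω : 0 < ω) (hc₁ : c₁ ≠ 0) (hc₂ : 0 < c₂)
    (hm : m = 2 * n / (n - 2))
    (Φ L M K N : ℝ → ℝ → ℝ)
    (hΦ : ∀ x y : ℝ, Φ x y = n / 2 * Real.log y - Real.log x)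
    (hL : ∀ x y : ℝ, L x y = c₁ * (x / y) ^ m)
    (hM : ∀ x y : ℝ, M x y = (y / x) * L x y)
    (hK : ∀ x y : ℝ, K x y = Real.sqrt (c₂ * (x / y) ^ m - ω ^ 2))
    (hN : ∀ x y : ℝ, N x y = -(2 * y / n) * K x y) :
    ∀ x y : ℝ, 0 < x → 0 < y → 0 < c₂ * (x / y) ^ m - ω ^ 2 →
      -- (i)
      (x * K x y * pdx M x y - N x y * pdy M x y + L x y * pdx N x y
        + M x y * (pdy N x y - K x y) = 0)
      ∧
      -- (ii)
      (R * x * y * (x * K x y * (pdx Φ x y + y * pdy (pdx Φ) x y)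
          - N x y * (2 * pdy Φ x y + y * pdy (pdy Φ) x y))
        + k * (L x y * pdx M x y + M x y * pdy M x y) = 0)
      ∧
      -- (iii)
      (R * L x y *
        (x * y * (pdx (pdx (pdx Φ)) x y * (L x y) ^ 2
            + 2 * pdy (pdx (pdx Φ)) x y * (L x y) * (M x y)
            + pdy (pdy (pdx Φ)) x y * (M x y) ^ 2)
          + (x * y * L x y * pdx L x y + x * y * M x y * pdy L x y
              + 2 * x * L x y * M x y + 3 * y * (L x y) ^ 2) * pdx (pdx Φ) x y
          + (x * y * L x y * pdx M x y
              + M x y * (x * y * pdy M x y + 2 * x * M x y + 3 * y * L x y))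
            * pdy (pdx Φ) x y
          + (2 * y * L x y * pdx L x y + 2 * y * M x y * pdy L x y
              + x * L x y * pdx M x y + M x y * (x * pdy M x y + 3 * L x y))
            * pdx Φ x y)
        + x * (K x y) ^ 2 * pdx L x y - K x y * N x y * pdy L x y
        - (x * K x y * M x y + L x y * N x y) * pdy K x y
        - 3 * L x y * (K x y) ^ 2 - ω ^ 2 * L x y = 0)
      ∧
      -- (iv)
      (x * (M x y * pdy K x y - K x y * pdx L x y + L x y * pdx K x y)
        + N x y * pdy L x y + 2 * K x y * L x y = 0) := by
  intro x y hx hy hq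
  have hx0 : x ≠ 0 := hx.ne'
  have hy0 : y ≠ 0 := hy.ne'
  have hn0 : n ≠ 0 := hn.ne'
  have hn2' : n - 2 ≠ 0 := sub_ne_zero.mpr hn2
  have hxy : 0 < x / y := div_pos hx hy
  -- partial derivatives of Φ
  have hFx : ∀ a b : ℝ, pdx Φ a b = -a⁻¹ := by
    intro a b
    simp only [pdx, hΦ, deriv_const_sub, Real.deriv_log]
  have hFy : ∀ a b : ℝ, pdy Φ a b = n / 2 * b⁻¹ := by
    intro a b
    simp only [pdy, hΦ, deriv_sub_const, deriv_const_mul_field, Real.deriv_log]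
  have hFxx : ∀ a b : ℝ, pdx (pdx Φ) a b = (a ^ 2)⁻¹ := by
    intro a b
    show deriv (fun x' => pdx Φ x' b) a = (a ^ 2)⁻¹
    rw [show (fun x' => pdx Φ x' b) = fun x' : ℝ => -x'⁻¹ from funext fun t => hFx t b]
    simp [deriv.neg, deriv_inv]
  have hFxy : ∀ a b : ℝ, pdy (pdx Φ) a b = 0 := by
    intro a b
    show deriv (fun y' => pdx Φ a y') b = 0
    rw [show (fun y' => pdx Φ a y') = fun _ : ℝ => -a⁻¹ from funext fun t => hFx a t]
    simp
  have hFyy : pdy (pdy Φ) x y = n / 2 * -(y ^ 2)⁻¹ := by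
    show deriv (fun y' => pdy Φ x y') y = n / 2 * -(y ^ 2)⁻¹
    rw [show (fun y' => pdy Φ x y') = fun y' : ℝ => n / 2 * y'⁻¹ from funext fun t => hFy x t]
    simp only [deriv_const_mul_field, deriv_inv]
  have hFxxy : pdy (pdx (pdx Φ)) x y = 0 := by
    show deriv (fun y' => pdx (pdx Φ) x y') y = 0
    rw [show (fun y' => pdx (pdx Φ) x y') = fun _ : ℝ => (x ^ 2)⁻¹ from
      funext fun t => hFxx x t]
    simp
  have hFxyy : pdy (pdy (pdx Φ)) x y = 0 := by
    show deriv (fun y' => pdy (pdx Φ) x y') y = 0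
    rw [show (fun y' => pdy (pdx Φ) x y') = fun _ : ℝ => (0 : ℝ) from
      funext fun t => hFxy x t]
    simp
  have hFxxx : pdx (pdx (pdx Φ)) x y = -(2 * x) / (x ^ 2) ^ 2 := by
    show deriv (fun x' => pdx (pdx Φ) x' y) x = -(2 * x) / (x ^ 2) ^ 2
    rw [show (fun x' => pdx (pdx Φ) x' y) = fun x' : ℝ => (x' ^ 2)⁻¹ from
      funext fun t => hFxx t y]
    have h : HasDerivAt (fun x' : ℝ => (x' ^ 2)⁻¹) (-(↑2 * x ^ (2 - 1)) / (x ^ 2) ^ 2) x :=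
      (hasDerivAt_pow 2 x).inv (pow_ne_zero 2 hx0)
    rw [h.deriv]
    norm_num
  -- abbreviation for the square root
  set s : ℝ := Real.sqrt (c₂ * (x / y) ^ m - ω ^ 2) with hs
  have hspos : 0 < s := Real.sqrt_pos.mpr hq
  have hs2 : s ^ 2 = c₂ * (x / y) ^ m - ω ^ 2 := Real.sq_sqrt hq.le
  -- partial derivatives of L, M, K, N
  have hP1 : HasDerivAt (fun x' : ℝ => (x' / y) ^ m) (m * (x / y) ^ m / x) x := by
    have h : HasDerivAt (fun x' : ℝ => (x' / y) ^ m) (1 / y * m * (x / y) ^ (m - 1)) x :=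
      ((hasDerivAt_id x).div_const y).rpow_const (Or.inl hxy.ne')
    convert h using 1
    rw [Real.rpow_sub hxy, Real.rpow_one]
    field_simp
  have hP2 : HasDerivAt (fun y' : ℝ => (x / y') ^ m) (-(m * (x / y) ^ m / y)) y := by
    have h0 : HasDerivAt (fun y' : ℝ => x / y') (x * -(y ^ 2)⁻¹) y := by
      simp only [div_eq_mul_inv]
      exact (hasDerivAt_inv hy0).const_mul x
    have h := h0.rpow_const (p := m) (Or.inl hxy.ne')
    convert h using 1
    rw [Real.rpow_sub hxy, Real.rpow_one]
    field_simp
  have hsx : HasDerivAt (fun x' : ℝ => Real.sqrt (c₂ * (x' / y) ^ m - ω ^ 2))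
      (c₂ * (m * (x / y) ^ m / x) / (2 * s)) x :=
    ((hP1.const_mul c₂).sub_const (ω ^ 2)).sqrt hq.ne'
  have hsy : HasDerivAt (fun y' : ℝ => Real.sqrt (c₂ * (x / y') ^ m - ω ^ 2))
      (c₂ * -(m * (x / y) ^ m / y) / (2 * s)) y :=
    ((hP2.const_mul c₂).sub_const (ω ^ 2)).sqrt hq.ne'
  have hLx : pdx L x y = c₁ * (m * (x / y) ^ m / x) := by
    simp only [pdx, hL]
    exact (hP1.const_mul c₁).deriv
  have hLy : pdy L x y = c₁ * -(m * (x / y) ^ m / y) := by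
    simp only [pdy, hL]
    exact (hP2.const_mul c₁).deriv
  have hMx : pdx M x y = y * -(x ^ 2)⁻¹ * (c₁ * (x / y) ^ m)
      + y / x * (c₁ * (m * (x / y) ^ m / x)) := by
    simp only [pdx, hM, hL]
    have h0 : HasDerivAt (fun x' : ℝ => y / x') (y * -(x ^ 2)⁻¹) x := by
      simp only [div_eq_mul_inv]
      exact (hasDerivAt_inv hx0).const_mul y
    exact (h0.mul (hP1.const_mul c₁)).deriv
  have hMy : pdy M x y = 1 / x * (c₁ * (x / y) ^ m)
      + y / x * (c₁ * -(m * (x / y) ^ m / y)) := by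
    simp only [pdy, hM, hL]
    exact (((hasDerivAt_id y).div_const x).mul (hP2.const_mul c₁)).deriv
  have hKx : pdx K x y = c₂ * (m * (x / y) ^ m / x) / (2 * s) := by
    simp only [pdx, hK]
    exact hsx.deriv
  have hKy : pdy K x y = c₂ * -(m * (x / y) ^ m / y) / (2 * s) := by
    simp only [pdy, hK]
    exact hsy.deriv
  have hNx : pdx N x y = -(2 * y / n) * (c₂ * (m * (x / y) ^ m / x) / (2 * s)) := by
    simp only [pdx, hN, hK]
    exact (hsx.const_mul (-(2 * y / n))).deriv
  have hNy : pdy N x y = -(2 / n) * s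
      + -(2 * y / n) * (c₂ * -(m * (x / y) ^ m / y) / (2 * s)) := by
    simp only [pdy, hN, hK]
    have h0 : HasDerivAt (fun y' : ℝ => -(2 * y' / n)) (-(2 / n)) y := by
      have := (((hasDerivAt_id y).const_mul 2).div_const n).neg
      simpa [Pi.neg_def] using this
    exact (h0.mul hsy).deriv
  have hKv : K x y = s := by rw [hK]
  have hNv : N x y = -(2 * y / n) * s := by rw [hN, hKv]
  refine ⟨?_, ?_, ?_, ?_⟩
  · -- (i)
    rw [hKv, hNv, hL, hM, hL, hMx, hMy, hNx, hNy]
    generalize (x / y) ^ m = u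
    rw [hm]
    field_simp
    ring
  · -- (ii)
    rw [hKv, hNv, hL, hM, hL, hMx, hMy, hFx, hFy, hFxy, hFyy]
    generalize (x / y) ^ m = u
    field_simp
    ring
  · -- (iii)
    rw [hKv, hNv, hL, hM, hL, hLx, hLy, hMx, hMy, hKy, hFx, hFxx, hFxy, hFxxx, hFxxy, hFxyy]
    rw [show ω ^ 2 = c₂ * (x / y) ^ m - s ^ 2 from by linarith]
    generalize (x / y) ^ m = u
    rw [hm]
    field_simp
    ring
  · -- (iv)
    rw [hKv, hNv, hL, hM, hL, hLx, hLy, hKx, hKy]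
    generalize (x / y) ^ m = u
    rw [hm]
    field_simp
    ring
end

section
/- Let R > 0, k > 0, n > 0, λ > 0, g > 0, set ω = √(2λg), and let c₁ ≠ 0, c₂ > 0, c₃, c₄, c₅ be real constants. Let I ⊂ ℝ be an open interval on which cos(c₃ − ωt) > 0. Define on I × ℝ (variables (t, a)): ρ(t, a) = ω/(√c₂ cos(c₃ − ωt)); let F₁ : I → ℝ be an antiderivative of t ↦ cos^{−2/n}(c₃ − ωt), set f(t) = −R c₁ c₂^{−(n+2)/(2n)} ω^{(n+2)/n} (F₁(t) + c₄)/cos(c₃ − ωt); let F₂ : I → ℝ be an antiderivative of t ↦ f(t)/cos(c₃ − ωt); define u(t, a) = a ω tan(c₃ − ωt) + f(t) and θ(t, a) = c₁ a ρ(t, a)^{1 + 2/n} − cos^{−2/n}(c₃ − ωt)(c₁ c₂^{−(n+2)/(2n)} ω^{(n+2)/n} F₂(t) + c₅). Then, with p = Rρθ, the triple (u, ρ, θ) satisfies on I × ℝ the Euler system: ρ(u_t + u u_a) = −p_a − 2ρgλa; ρ_t + (ρu)_a = 0; and R((n/2)ρ(θ_t + u θ_a) − θ(ρ_t + u ρ_a))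 = k θ_aa. -/
/-- The exact solution of the Euler system of an ideal gas on the curve
h(a) = λa² obtained from the quotient solution L = 0, M = c₁x^(1+2/n),
K = √(c₂x²−ω²), N = −(2y/n)K: with ω = √(2λg), on an open interval I where
cos(c₃ − ωt) > 0, the functions
ρ = ω/(√c₂ cos(c₃−ωt)),
u = aω tan(c₃−ωt) + f(t),
θ = c₁aρ^(1+2/n) − cos^(−2/n)(c₃−ωt)(c₁c₂^(−(n+2)/(2n))ω^((n+2)/n) F₂(t) + c₅),
where f(t) = −Rc₁c₂^(−(n+2)/(2n))ω^((n+2)/n)(F₁(t)+c₄)/cos(c₃−ωt),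
F₁′ = cos^(−2/n)(c₃−ωt) and F₂′ = f/cos(c₃−ωt),
satisfy (with p = Rρθ) the Euler system
ρ(u_t + uu_a) = −p_a − 2ρgλa,  ρ_t + (ρu)_a = 0,
R((n/2)ρ(θ_t + uθ_a) − θ(ρ_t + uρ_a)) = kθ_aa. -/
theorem stmt10 (R k n lam g ω : ℝ) (hR : 0 < R) (hk : 0 < k) (hn : 0 < n)
    (hlam : 0 < lam) (hg : 0 < g) (hω : ω = Real.sqrt (2 * lam * g))
    (c₁ c₂ c₃ c₄ c₅ : ℝ) (hc₁ : c₁ ≠ 0) (hc₂ : 0 < c₂)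
    (t₁ t₂ : ℝ)
    (hcos : ∀ t ∈ Set.Ioo t₁ t₂, 0 < Real.cos (c₃ - ω * t))
    (F₁ : ℝ → ℝ)
    (hF₁ : ∀ t ∈ Set.Ioo t₁ t₂,
      HasDerivAt F₁ (Real.cos (c₃ - ω * t) ^ (-(2 / n))) t)
    (f : ℝ → ℝ)
    (hf : ∀ t : ℝ, f t = -R * c₁ * c₂ ^ (-((n + 2) / (2 * n))) * ω ^ ((n + 2) / n)
      * (F₁ t + c₄) / Real.cos (c₃ - ω * t))
    (F₂ : ℝ → ℝ)
    (hF₂ : ∀ t ∈ Set.Ioo t₁ t₂, HasDerivAt F₂ (f t / Real.cos (c₃ - ω * t)) t)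
    (u ρ θ p : ℝ → ℝ → ℝ)
    (hu : ∀ t a : ℝ, u t a = a * ω * Real.tan (c₃ - ω * t) + f t)
    (hρ : ∀ t a : ℝ, ρ t a = ω / (Real.sqrt c₂ * Real.cos (c₃ - ω * t)))
    (hθ : ∀ t a : ℝ, θ t a = c₁ * a * ρ t a ^ (1 + 2 / n)
      - Real.cos (c₃ - ω * t) ^ (-(2 / n))
        * (c₁ * c₂ ^ (-((n + 2) / (2 * n))) * ω ^ ((n + 2) / n) * F₂ t + c₅))
    (hp : ∀ t a : ℝ, p t a = R * ρ t a * θ t a) :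
    ∀ t ∈ Set.Ioo t₁ t₂, ∀ a : ℝ,
      (ρ t a * (deriv (fun s => u s a) t + u t a * deriv (u t) a)
        = -(deriv (p t) a) - 2 * ρ t a * g * lam * a)
      ∧ (deriv (fun s => ρ s a) t + deriv (fun b => ρ t b * u t b) a = 0)
      ∧ (R * ((n / 2) * ρ t a * (deriv (fun s => θ s a) t + u t a * deriv (θ t) a)
            - θ t a * (deriv (fun s => ρ s a) t + u t a * deriv (ρ t) a))
          = k * deriv (deriv (θ t)) a) := by
  intro t ht a
  have hn' : n ≠ 0 := ne_of_gt hn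
  have hω0 : 0 < ω := by rw [hω]; exact Real.sqrt_pos.mpr (by positivity)
  have hB0 : 0 < Real.sqrt c₂ := Real.sqrt_pos.mpr hc₂
  have hc : 0 < Real.cos (c₃ - ω * t) := hcos t ht
  have hc' : Real.cos (c₃ - ω * t) ≠ 0 := ne_of_gt hc
  have hω2 : ω ^ 2 = 2 * lam * g := by rw [hω, Real.sq_sqrt (by positivity)]
  have hpyth : Real.sin (c₃ - ω * t) ^ 2 + Real.cos (c₃ - ω * t) ^ 2 = 1 :=
    Real.sin_sq_add_cos_sq _
  have hW0 : 0 < ω / Real.sqrt c₂ := div_pos hω0 hB0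
  have hE0 : 0 < ω / (Real.sqrt c₂ * Real.cos (c₃ - ω * t)) :=
    div_pos hω0 (mul_pos hB0 hc)
  have hP0 : 0 < Real.cos (c₃ - ω * t) ^ (-(2 / n)) := Real.rpow_pos_of_pos hc _
  -- rpow algebra
  have hA : c₂ ^ (-((n + 2) / (2 * n))) * ω ^ ((n + 2) / n)
      = (ω / Real.sqrt c₂) ^ (1 + 2 / n) := by
    have h1 : c₂ ^ (-((n + 2) / (2 * n))) = Real.sqrt c₂ ^ (-(1 + 2 / n)) := by
      rw [Real.sqrt_eq_rpow, ← Real.rpow_mul hc₂.le]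
      congr 1
      field_simp
    have h2 : ω ^ ((n + 2) / n) = ω ^ (1 + 2 / n) := by
      congr 1
      field_simp
    rw [h1, h2, Real.div_rpow hω0.le hB0.le, Real.rpow_neg hB0.le]
    ring
  have hc_m : Real.cos (c₃ - ω * t) ^ (1 + 2 / n)
      = Real.cos (c₃ - ω * t) / Real.cos (c₃ - ω * t) ^ (-(2 / n)) := by
    rw [eq_div_iff (ne_of_gt hP0), ← Real.rpow_add hc,
      show (1 : ℝ) + 2 / n + -(2 / n) = 1 by ring, Real.rpow_one]
  have hEpow : (ω / (Real.sqrt c₂ * Real.cos (c₃ - ω * t))) ^ (1 + 2 / n)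
      = c₂ ^ (-((n + 2) / (2 * n))) * ω ^ ((n + 2) / n)
        * Real.cos (c₃ - ω * t) ^ (-(2 / n)) / Real.cos (c₃ - ω * t) := by
    rw [hA, ← div_div, Real.div_rpow hW0.le hc.le, hc_m, div_div_eq_mul_div]
  have hEpow2 : (ω / (Real.sqrt c₂ * Real.cos (c₃ - ω * t))) ^ (1 + 2 / n - 1)
      = c₂ ^ (-((n + 2) / (2 * n))) * ω ^ ((n + 2) / n)
        * Real.cos (c₃ - ω * t) ^ (-(2 / n)) / Real.cos (c₃ - ω * t)
        / (ω / (Real.sqrt c₂ * Real.cos (c₃ - ω * t))) := by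
    rw [Real.rpow_sub hE0, Real.rpow_one, hEpow]
  have hPm1 : Real.cos (c₃ - ω * t) ^ (-(2 / n) - 1)
      = Real.cos (c₃ - ω * t) ^ (-(2 / n)) / Real.cos (c₃ - ω * t) := by
    rw [Real.rpow_sub hc, Real.rpow_one]
  -- basic derivatives in t
  have hin : HasDerivAt (fun x : ℝ => c₃ - ω * x) (-ω) t := by
    simpa using ((hasDerivAt_id t).const_mul ω).const_sub c₃
  have hcosD : HasDerivAt (fun x : ℝ => Real.cos (c₃ - ω * x))
      (ω * Real.sin (c₃ - ω * t)) t := by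
    have h : HasDerivAt (fun x : ℝ => Real.cos (c₃ - ω * x))
        (-Real.sin (c₃ - ω * t) * -ω) t :=
      HasDerivAt.comp (h₂ := Real.cos) t (Real.hasDerivAt_cos (c₃ - ω * t)) hin
    convert h using 1
    ring
  have hF₁' := hF₁ t ht
  have hF₂' := hF₂ t ht
  -- derivative of f
  have hfun_f : f = fun x => -R * c₁ * c₂ ^ (-((n + 2) / (2 * n))) * ω ^ ((n + 2) / n)
      * (F₁ x + c₄) / Real.cos (c₃ - ω * x) := funext fun x => hf x
  have hfD : HasDerivAt f
      ((-R * c₁ * c₂ ^ (-((n + 2) / (2 * n))) * ω ^ ((n + 2) / n)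
            * Real.cos (c₃ - ω * t) ^ (-(2 / n)) * Real.cos (c₃ - ω * t)
          - -R * c₁ * c₂ ^ (-((n + 2) / (2 * n))) * ω ^ ((n + 2) / n) * (F₁ t + c₄)
            * (ω * Real.sin (c₃ - ω * t))) / Real.cos (c₃ - ω * t) ^ 2) t := by
    rw [hfun_f]
    exact ((hF₁'.add_const c₄).const_mul
        (-R * c₁ * c₂ ^ (-((n + 2) / (2 * n))) * ω ^ ((n + 2) / n))).div hcosD hc'
  -- rewrite goal functions
  rw [hu t a, hθ t a, hρ t a,
    show (fun s => u s a) = fun x => a * ω * Real.tan (c₃ - ω * x) + f x from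
      funext fun x => hu x a,
    show (fun s => ρ s a) = fun x => ω / (Real.sqrt c₂ * Real.cos (c₃ - ω * x)) from
      funext fun x => hρ x a,
    show (fun s => θ s a) = fun x =>
        c₁ * a * (ω / (Real.sqrt c₂ * Real.cos (c₃ - ω * x))) ^ (1 + 2 / n)
        - Real.cos (c₃ - ω * x) ^ (-(2 / n))
          * (c₁ * c₂ ^ (-((n + 2) / (2 * n))) * ω ^ ((n + 2) / n) * F₂ x + c₅) from
      funext fun x => by rw [hθ x a, hρ x a],
    show (fun b => ρ t b * u t b) = fun b =>
        ω / (Real.sqrt c₂ * Real.cos (c₃ - ω * t))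
          * (b * ω * Real.tan (c₃ - ω * t) + f t) from
      funext fun b => by rw [hρ t b, hu t b],
    show u t = fun b => b * ω * Real.tan (c₃ - ω * t) + f t from funext fun b => hu t b,
    show ρ t = fun b => ω / (Real.sqrt c₂ * Real.cos (c₃ - ω * t)) from
      funext fun b => hρ t b,
    show p t = fun b =>
        R * (ω / (Real.sqrt c₂ * Real.cos (c₃ - ω * t)))
          * (c₁ * b * (ω / (Real.sqrt c₂ * Real.cos (c₃ - ω * t))) ^ (1 + 2 / n)
            - Real.cos (c₃ - ω * t) ^ (-(2 / n))
              * (c₁ * c₂ ^ (-((n + 2) / (2 * n))) * ω ^ ((n + 2) / n) * F₂ t + c₅)) from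
      funext fun b => by rw [hp t b, hθ t b, hρ t b],
    show θ t = fun b =>
        c₁ * b * (ω / (Real.sqrt c₂ * Real.cos (c₃ - ω * t))) ^ (1 + 2 / n)
        - Real.cos (c₃ - ω * t) ^ (-(2 / n))
          * (c₁ * c₂ ^ (-((n + 2) / (2 * n))) * ω ^ ((n + 2) / n) * F₂ t + c₅) from
      funext fun b => by rw [hθ t b, hρ t b]]
  have hEe : HasDerivAt (fun x => ω / (Real.sqrt c₂ * Real.cos (c₃ - ω * x)))
      ((0 * (Real.sqrt c₂ * Real.cos (c₃ - ω * t)) - ω * (Real.sqrt c₂ * (ω * Real.sin (c₃ - ω * t)))) / (Real.sqrt c₂ * Real.cos (c₃ - ω * t)) ^ 2) t :=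
    (hasDerivAt_const t ω).div (hcosD.const_mul (Real.sqrt c₂)) (mul_pos hB0 hc).ne'
  have hD1 : deriv (fun x => a * ω * Real.tan (c₃ - ω * x) + f x) t
      = a * ω * (1 / Real.cos (c₃ - ω * t) ^ 2 * -ω) + ((-R * c₁ * c₂ ^ (-((n + 2) / (2 * n))) * ω ^ ((n + 2) / n)
            * Real.cos (c₃ - ω * t) ^ (-(2 / n)) * Real.cos (c₃ - ω * t)
          - -R * c₁ * c₂ ^ (-((n + 2) / (2 * n))) * ω ^ ((n + 2) / n) * (F₁ t + c₄)
            * (ω * Real.sin (c₃ - ω * t))) / Real.cos (c₃ - ω * t) ^ 2) :=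
    ((((Real.hasDerivAt_tan hc').comp t hin).const_mul (a * ω)).add hfD).deriv
  have hD2 : deriv (fun b => b * ω * Real.tan (c₃ - ω * t) + f t) a
      = 1 * ω * Real.tan (c₃ - ω * t) :=
    ((((hasDerivAt_id a).mul_const ω).mul_const (Real.tan (c₃ - ω * t))).add_const (f t)).deriv
  have hD3 : deriv (fun b =>
        R * (ω / (Real.sqrt c₂ * Real.cos (c₃ - ω * t))) * (c₁ * b * (ω / (Real.sqrt c₂ * Real.cos (c₃ - ω * t))) ^ (1 + 2 / n)
          - Real.cos (c₃ - ω * t) ^ (-(2 / n)) * (c₁ * c₂ ^ (-((n + 2) / (2 * n))) * ω ^ ((n + 2) / n) * F₂ t + c₅))) a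
      = R * (ω / (Real.sqrt c₂ * Real.cos (c₃ - ω * t))) * (c₁ * 1 * (ω / (Real.sqrt c₂ * Real.cos (c₃ - ω * t))) ^ (1 + 2 / n)) :=
    (((((hasDerivAt_id a).const_mul c₁).mul_const ((ω / (Real.sqrt c₂ * Real.cos (c₃ - ω * t))) ^ (1 + 2 / n))).sub_const
        (Real.cos (c₃ - ω * t) ^ (-(2 / n)) * (c₁ * c₂ ^ (-((n + 2) / (2 * n))) * ω ^ ((n + 2) / n) * F₂ t + c₅))).const_mul
      (R * (ω / (Real.sqrt c₂ * Real.cos (c₃ - ω * t))))).deriv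
  have hD4 : deriv (fun x => ω / (Real.sqrt c₂ * Real.cos (c₃ - ω * x))) t
      = (0 * (Real.sqrt c₂ * Real.cos (c₃ - ω * t)) - ω * (Real.sqrt c₂ * (ω * Real.sin (c₃ - ω * t)))) / (Real.sqrt c₂ * Real.cos (c₃ - ω * t)) ^ 2 := hEe.deriv
  have hD5 : deriv (fun b => (ω / (Real.sqrt c₂ * Real.cos (c₃ - ω * t))) * (b * ω * Real.tan (c₃ - ω * t) + f t)) a
      = (ω / (Real.sqrt c₂ * Real.cos (c₃ - ω * t))) * (1 * ω * Real.tan (c₃ - ω * t)) :=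
    (((((hasDerivAt_id a).mul_const ω).mul_const (Real.tan (c₃ - ω * t))).add_const
        (f t)).const_mul (ω / (Real.sqrt c₂ * Real.cos (c₃ - ω * t)))).deriv
  have hD6 : deriv (fun x =>
        c₁ * a * (ω / (Real.sqrt c₂ * Real.cos (c₃ - ω * x))) ^ (1 + 2 / n)
        - Real.cos (c₃ - ω * x) ^ (-(2 / n)) * (c₁ * c₂ ^ (-((n + 2) / (2 * n))) * ω ^ ((n + 2) / n) * F₂ x + c₅)) t
      = c₁ * a * (((0 * (Real.sqrt c₂ * Real.cos (c₃ - ω * t)) - ω * (Real.sqrt c₂ * (ω * Real.sin (c₃ - ω * t)))) / (Real.sqrt c₂ * Real.cos (c₃ - ω * t)) ^ 2) * (1 + 2 / n) * (ω / (Real.sqrt c₂ * Real.cos (c₃ - ω * t))) ^ (1 + 2 / n - 1))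
        - (ω * Real.sin (c₃ - ω * t) * (-(2 / n)) * Real.cos (c₃ - ω * t) ^ (-(2 / n) - 1)
            * (c₁ * c₂ ^ (-((n + 2) / (2 * n))) * ω ^ ((n + 2) / n) * F₂ t + c₅)
          + Real.cos (c₃ - ω * t) ^ (-(2 / n)) * (c₁ * c₂ ^ (-((n + 2) / (2 * n))) * ω ^ ((n + 2) / n) * (f t / Real.cos (c₃ - ω * t)))) :=
    (((hEe.rpow_const (Or.inl hE0.ne')).const_mul (c₁ * a)).sub
      ((hcosD.rpow_const (Or.inl hc')).mul ((hF₂'.const_mul (c₁ * c₂ ^ (-((n + 2) / (2 * n))) * ω ^ ((n + 2) / n))).add_const c₅))).deriv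
  have hD7 : deriv (fun b => c₁ * b * (ω / (Real.sqrt c₂ * Real.cos (c₃ - ω * t))) ^ (1 + 2 / n)
        - Real.cos (c₃ - ω * t) ^ (-(2 / n)) * (c₁ * c₂ ^ (-((n + 2) / (2 * n))) * ω ^ ((n + 2) / n) * F₂ t + c₅)) a
      = c₁ * 1 * (ω / (Real.sqrt c₂ * Real.cos (c₃ - ω * t))) ^ (1 + 2 / n) :=
    ((((hasDerivAt_id a).const_mul c₁).mul_const ((ω / (Real.sqrt c₂ * Real.cos (c₃ - ω * t))) ^ (1 + 2 / n))).sub_const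
      (Real.cos (c₃ - ω * t) ^ (-(2 / n)) * (c₁ * c₂ ^ (-((n + 2) / (2 * n))) * ω ^ ((n + 2) / n) * F₂ t + c₅))).deriv
  have hD8 : deriv (fun _ : ℝ => ω / (Real.sqrt c₂ * Real.cos (c₃ - ω * t))) a = 0 := deriv_const a _
  have hD9 : deriv (deriv (fun b => c₁ * b * (ω / (Real.sqrt c₂ * Real.cos (c₃ - ω * t))) ^ (1 + 2 / n)
        - Real.cos (c₃ - ω * t) ^ (-(2 / n)) * (c₁ * c₂ ^ (-((n + 2) / (2 * n))) * ω ^ ((n + 2) / n) * F₂ t + c₅))) a = 0 := by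
    have hconst : (deriv fun b : ℝ => c₁ * b * (ω / (Real.sqrt c₂ * Real.cos (c₃ - ω * t))) ^ (1 + 2 / n)
          - Real.cos (c₃ - ω * t) ^ (-(2 / n)) * (c₁ * c₂ ^ (-((n + 2) / (2 * n))) * ω ^ ((n + 2) / n) * F₂ t + c₅))
        = fun _ : ℝ => c₁ * 1 * (ω / (Real.sqrt c₂ * Real.cos (c₃ - ω * t))) ^ (1 + 2 / n) := funext fun b =>
      ((((hasDerivAt_id b).const_mul c₁).mul_const ((ω / (Real.sqrt c₂ * Real.cos (c₃ - ω * t))) ^ (1 + 2 / n))).sub_const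
        (Real.cos (c₃ - ω * t) ^ (-(2 / n)) * (c₁ * c₂ ^ (-((n + 2) / (2 * n))) * ω ^ ((n + 2) / n) * F₂ t + c₅))).deriv
    rw [hconst]
    exact deriv_const a _
  rw [hD1, hD2, hD3, hD4, hD5, hD6, hD7, hD8, hD9, hf t,
    Real.tan_eq_sin_div_cos (c₃ - ω * t), hEpow, hEpow2, hPm1]
  refine ⟨?_, ?_, ?_⟩
  · field_simp
    linear_combination (a * ω ^ 2) * hpyth
      - (a * Real.cos (c₃ - ω * t) ^ 2) * hω2
  · field_simp
    ring
  · field_simp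
    ring
end

section
/- Let R > 0, k > 0, n > 0 with n ≠ 2, λ > 0, g > 0, set ω = √(2λg), and let c₁ ≠ 0, c₂ > 0, c₃, c₄, c₅ be real constants. Let I ⊂ ℝ be an open interval on which cos(c₃ − ωt) > 0. Let F₁ : I → ℝ be an antiderivative of t ↦ cos^{−2/n}(c₃ − ωt) and set f(t) = −R c₁ c₂^{−(n+2)/(2n)} ω^{(n+2)/n} (F₁(t) + c₄)/cos(c₃ − ωt); let F₃ : I → ℝ be an antiderivative of t ↦ 2f(t)/cos(c₃ − ωt). Define on I × ℝ: u(t, a) = a ω tan(c₃ − ωt) + 2f(t); ρ(t, a) = c₁ω²a/(c₂ cos²(c₃ − ωt)) − (c₁ω²/(c₂ cos(c₃ − ωt)))(F₃(t) + c₅); θ(t, a) = ρ(t, a) · (c₂ cos²(c₃ − ωt)/ω²)^{(n−2)/(2n)}. Then, with p = Rρθ, the triple (u, ρ, θ) satisfies on I × ℝ the Euler system: ρ(u_t + u u_a) = −p_a − 2ρgλa; ρ_t + (ρu)_a = 0; and R((n/2)ρ(θ_t + u θ_a) − θ(ρ_t + u ρ_a)) = k θ_aa. -/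
set_option maxHeartbeats 1000000 in
/-- The exact solution of the Euler system of an ideal gas on the curve
h(a) = λa² obtained from the quotient solution L = c₁(x/y)^m, M = (y/x)L,
K = √(c₂(x/y)^m − ω²), N = −(2y/n)K: with ω = √(2λg), on an open interval I
where cos(c₃ − ωt) > 0, the functions
u = aω tan(c₃−ωt) + 2f(t),
ρ = c₁ω²a/(c₂cos²(c₃−ωt)) − (c₁ω²/(c₂cos(c₃−ωt)))(F₃(t)+c₅),
θ = ρ · (c₂cos²(c₃−ωt)/ω²)^((n−2)/(2n)),
where f(t) = −Rc₁c₂^(−(n+2)/(2n))ω^((n+2)/n)(F₁(t)+c₄)/cos(c₃−ωt),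
F₁′ = cos^(−2/n)(c₃−ωt) and F₃′ = 2f/cos(c₃−ωt),
satisfy (with p = Rρθ) the Euler system
ρ(u_t + uu_a) = −p_a − 2ρgλa,  ρ_t + (ρu)_a = 0,
R((n/2)ρ(θ_t + uθ_a) − θ(ρ_t + uρ_a)) = kθ_aa. -/
theorem stmt11 (R k n lam g ω : ℝ) (hR : 0 < R) (hk : 0 < k) (hn : 0 < n)
    (hn2 : n ≠ 2) (hlam : 0 < lam) (hg : 0 < g) (hω : ω = Real.sqrt (2 * lam * g))
    (c₁ c₂ c₃ c₄ c₅ : ℝ) (hc₁ : c₁ ≠ 0) (hc₂ : 0 < c₂)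
    (t₁ t₂ : ℝ)
    (hcos : ∀ t ∈ Set.Ioo t₁ t₂, 0 < Real.cos (c₃ - ω * t))
    (F₁ : ℝ → ℝ)
    (hF₁ : ∀ t ∈ Set.Ioo t₁ t₂,
      HasDerivAt F₁ (Real.cos (c₃ - ω * t) ^ (-(2 / n))) t)
    (f : ℝ → ℝ)
    (hf : ∀ t : ℝ, f t = -R * c₁ * c₂ ^ (-((n + 2) / (2 * n))) * ω ^ ((n + 2) / n)
      * (F₁ t + c₄) / Real.cos (c₃ - ω * t))
    (F₃ : ℝ → ℝ)
    (hF₃ : ∀ t ∈ Set.Ioo t₁ t₂, HasDerivAt F₃ (2 * f t / Real.cos (c₃ - ω * t)) t)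
    (u ρ θ p : ℝ → ℝ → ℝ)
    (hu : ∀ t a : ℝ, u t a = a * ω * Real.tan (c₃ - ω * t) + 2 * f t)
    (hρ : ∀ t a : ℝ, ρ t a = c₁ * ω ^ 2 * a / (c₂ * Real.cos (c₃ - ω * t) ^ 2)
      - c₁ * ω ^ 2 / (c₂ * Real.cos (c₃ - ω * t)) * (F₃ t + c₅))
    (hθ : ∀ t a : ℝ, θ t a = ρ t a
      * (c₂ * Real.cos (c₃ - ω * t) ^ 2 / ω ^ 2) ^ ((n - 2) / (2 * n)))
    (hp : ∀ t a : ℝ, p t a = R * ρ t a * θ t a) :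
    ∀ t ∈ Set.Ioo t₁ t₂, ∀ a : ℝ,
      (ρ t a * (deriv (fun s => u s a) t + u t a * deriv (u t) a)
        = -(deriv (p t) a) - 2 * ρ t a * g * lam * a)
      ∧ (deriv (fun s => ρ s a) t + deriv (fun b => ρ t b * u t b) a = 0)
      ∧ (R * ((n / 2) * ρ t a * (deriv (fun s => θ s a) t + u t a * deriv (θ t) a)
            - θ t a * (deriv (fun s => ρ s a) t + u t a * deriv (ρ t) a))
          = k * deriv (deriv (θ t)) a) := by
  have hω0 : 0 < ω := by
    rw [hω]; exact Real.sqrt_pos.mpr (by positivity)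
  have hω2 : ω ^ 2 = 2 * lam * g := by
    rw [hω, sq]; exact Real.mul_self_sqrt (by positivity)
  have hn0 : n ≠ 0 := ne_of_gt hn
  have hgval : g = ω ^ 2 / (2 * lam) := by rw [hω2]; field_simp
  intro t ht a
  have hc : 0 < Real.cos (c₃ - ω * t) := hcos t ht
  have hcne : Real.cos (c₃ - ω * t) ≠ 0 := ne_of_gt hc
  have hden1 : c₂ * Real.cos (c₃ - ω * t) ^ 2 ≠ 0 := by positivity
  have hden2 : c₂ * Real.cos (c₃ - ω * t) ≠ 0 := by positivity
  have hbpos : 0 < c₂ * Real.cos (c₃ - ω * t) ^ 2 / ω ^ 2 := by positivity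
  have hbne : c₂ * Real.cos (c₃ - ω * t) ^ 2 / ω ^ 2 ≠ 0 := ne_of_gt hbpos
  have hss : Real.sin (c₃ - ω * t) ^ 2 = 1 - Real.cos (c₃ - ω * t) ^ 2 := by
    have := Real.sin_sq_add_cos_sq (c₃ - ω * t); linarith
  -- inner derivative
  have H1 : HasDerivAt (fun τ : ℝ => c₃ - ω * τ) (-(ω * 1)) t :=
    ((hasDerivAt_id t).const_mul ω).const_sub c₃
  have Hcos : HasDerivAt (fun τ : ℝ => Real.cos (c₃ - ω * τ))
      (-Real.sin (c₃ - ω * t) * -(ω * 1)) t := H1.cos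
  have Htan : HasDerivAt (fun τ : ℝ => Real.tan (c₃ - ω * τ))
      (1 / Real.cos (c₃ - ω * t) ^ 2 * -(ω * 1)) t :=
    by have := (Real.hasDerivAt_tan hcne).comp t H1; exact this
  -- f
  have Hf := (((hF₁ t ht).add_const c₄).const_mul
      (-R * c₁ * c₂ ^ (-((n + 2) / (2 * n))) * ω ^ ((n + 2) / n))).div Hcos hcne
  have Hf' := Hf.congr_of_eventuallyEq (Filter.Eventually.of_forall hf)
  -- time derivative of u(·, a)
  have Hut := ((Htan.const_mul (a * ω)).add (Hf'.const_mul 2)).congr_of_eventuallyEq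
    (Filter.Eventually.of_forall fun τ => hu τ a)
  -- time derivative of ρ(·, a)
  have Hρt := (((hasDerivAt_const t (c₁ * ω ^ 2 * a)).div ((Hcos.pow 2).const_mul c₂) hden1).sub
      (((hasDerivAt_const t (c₁ * ω ^ 2)).div (Hcos.const_mul c₂) hden2).mul
        ((hF₃ t ht).add_const c₅))).congr_of_eventuallyEq
    (Filter.Eventually.of_forall fun τ => hρ τ a)
  -- time derivative of the rpow factor and of θ(·, a)
  have HG := (((Hcos.pow 2).const_mul c₂).div_const (ω ^ 2)).rpow_const
    (p := (n - 2) / (2 * n)) (Or.inl hbne)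
  have Hθt := (Hρt.mul HG).congr_of_eventuallyEq
    (Filter.Eventually.of_forall fun τ => hθ τ a)
  -- space derivatives
  have Hρa : ∀ b : ℝ, HasDerivAt (ρ t)
      (c₁ * ω ^ 2 * 1 / (c₂ * Real.cos (c₃ - ω * t) ^ 2)) b := by
    intro b
    exact ((((hasDerivAt_id b).const_mul (c₁ * ω ^ 2)).div_const
        (c₂ * Real.cos (c₃ - ω * t) ^ 2)).sub_const
        (c₁ * ω ^ 2 / (c₂ * Real.cos (c₃ - ω * t)) * (F₃ t + c₅))).congr_of_eventuallyEq
      (Filter.Eventually.of_forall fun b => hρ t b)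
  have Hθa : ∀ b : ℝ, HasDerivAt (θ t)
      (c₁ * ω ^ 2 * 1 / (c₂ * Real.cos (c₃ - ω * t) ^ 2)
        * (c₂ * Real.cos (c₃ - ω * t) ^ 2 / ω ^ 2) ^ ((n - 2) / (2 * n))) b := by
    intro b
    exact ((Hρa b).mul_const _).congr_of_eventuallyEq
      (Filter.Eventually.of_forall fun b => hθ t b)
  have Hua : HasDerivAt (u t) (1 * ω * Real.tan (c₃ - ω * t)) a := by
    exact ((((hasDerivAt_id a).mul_const ω).mul_const (Real.tan (c₃ - ω * t))).add_const
      (2 * f t)).congr_of_eventuallyEq (Filter.Eventually.of_forall fun b => hu t b)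
  have Hpa := (((Hρa a).const_mul R).mul (Hθa a)).congr_of_eventuallyEq
    (Filter.Eventually.of_forall fun b => hp t b)
  have Hρu := (Hρa a).mul Hua
  -- second derivative of θ t vanishes
  have hθd : deriv (θ t) = fun _ : ℝ => c₁ * ω ^ 2 * 1 / (c₂ * Real.cos (c₃ - ω * t) ^ 2)
      * (c₂ * Real.cos (c₃ - ω * t) ^ 2 / ω ^ 2) ^ ((n - 2) / (2 * n)) :=
    funext fun b => (Hθa b).deriv
  have hθdd : deriv (deriv (θ t)) a = 0 := by rw [hθd]; exact deriv_const _ _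
  -- key rpow identities
  have key2 : (c₂ * Real.cos (c₃ - ω * t) ^ 2 / ω ^ 2) ^ ((n - 2) / (2 * n) - 1)
      = (c₂ * Real.cos (c₃ - ω * t) ^ 2 / ω ^ 2) ^ ((n - 2) / (2 * n))
        / (c₂ * Real.cos (c₃ - ω * t) ^ 2 / ω ^ 2) := by
    rw [eq_div_iff hbne, ← Real.rpow_add_one hbne]
    norm_num
  have key1 : (c₂ * Real.cos (c₃ - ω * t) ^ 2 / ω ^ 2) ^ ((n - 2) / (2 * n))
      = Real.cos (c₃ - ω * t) ^ (-(2 / n)) * Real.cos (c₃ - ω * t)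
        * (c₂ ^ (-((n + 2) / (2 * n))) * ω ^ ((n + 2) / n)) * c₂ / ω ^ 2 := by
    have e1 : Real.cos (c₃ - ω * t) ^ (-(2 / n)) * Real.cos (c₃ - ω * t)
        = Real.cos (c₃ - ω * t) ^ ((n - 2) / n) := by
      rw [← Real.rpow_add_one hcne]
      congr 1
      field_simp
      ring
    have e2 : c₂ ^ (-((n + 2) / (2 * n))) * c₂ = c₂ ^ ((n - 2) / (2 * n)) := by
      rw [← Real.rpow_add_one hc₂.ne']
      congr 1
      field_simp
      ring
    have e3 : ω ^ ((n + 2) / n) / ω ^ 2 = (ω ^ ((n - 2) / n))⁻¹ := by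
      rw [← Real.rpow_natCast ω 2, ← Real.rpow_sub hω0, ← Real.rpow_neg hω0.le]
      congr 1
      push_cast
      field_simp
      ring
    have hL : (c₂ * Real.cos (c₃ - ω * t) ^ 2 / ω ^ 2) ^ ((n - 2) / (2 * n))
        = c₂ ^ ((n - 2) / (2 * n)) * Real.cos (c₃ - ω * t) ^ ((n - 2) / n)
          / ω ^ ((n - 2) / n) := by
      rw [Real.div_rpow (by positivity) (by positivity),
        Real.mul_rpow hc₂.le (by positivity),
        ← Real.rpow_natCast (Real.cos (c₃ - ω * t)) 2, ← Real.rpow_natCast ω 2,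
        ← Real.rpow_mul hc.le, ← Real.rpow_mul hω0.le,
        show ((2 : ℕ) : ℝ) * ((n - 2) / (2 * n)) = (n - 2) / n by push_cast; field_simp]
    rw [hL, ← e1, ← e2, div_eq_mul_inv _ (ω ^ ((n - 2) / n)), ← e3]
    ring
  refine ⟨?_, ?_, ?_⟩
  · -- momentum
    rw [Hut.deriv, Hua.deriv, Hpa.deriv, hθ t a, hρ t a, hu t a, hf t,
        Real.tan_eq_sin_div_cos, hgval, key1]
    field_simp
    linear_combination ((a - Real.cos (c₃ - ω*t)*(F₃ t + c₅)) * ω^2 * a) * hss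
  · -- mass
    rw [Hρt.deriv, show deriv (fun b => ρ t b * u t b) a = _ from Hρu.deriv, hρ t a, hu t a, Real.tan_eq_sin_div_cos]
    simp only [Pi.pow_apply, Pi.div_apply]
    field_simp
    ring
  · -- entropy
    rw [Hθt.deriv, Hρt.deriv, (Hθa a).deriv, (Hρa a).deriv, hθdd, hθ t a, hρ t a,
        hu t a, Real.tan_eq_sin_div_cos]
    simp only [Pi.pow_apply, Pi.div_apply]
    rw [key2]
    field_simp
    ring
end

section
/- Let R > 0, ω > 0 and let c₁ ≠ 0, c₂, c₃ be real constants. Let I ⊂ ℝ be an open interval and N₀ : I → ℝ a twice-differentiable function, nowhere zero, with c₁²Ry − N₀(y)² ≠ 0 on I, satisfying the ODE N₀′(y) = (c₁c₂Ry + (ω²y − c₃)N₀(y)) / (c₁²Ry − N₀(y)²). Define M₀ = c₁ (constant), K₀ = N₀′, and L₀ = (c₂ − c₁N₀′)/N₀. Then on I the quadruple (M₀, K₀, L₀, N₀) satisfies all four equations of the zeroth-order system: M₀M₀′ = 0; M₀N₀′ − N₀M₀′ − K₀M₀ = 0; (L₀N₀ + M₀K₀)(N₀L₀′ + M₀K₀′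 + K₀L₀) = 0; and RM₀²(yL₀′ + M₀′ + L₀) − L₀′N₀² + M₀(K₀² + ω²) − L₀K₀N₀ = 0. -/
set_option maxHeartbeats 4000000 in
/-- If N₀ is twice differentiable, nowhere zero, with c₁²Ry − N₀(y)² ≠ 0,
and satisfies the flow-temperature ODE
N₀′ = (c₁c₂Ry + (ω²y − c₃)N₀)/(c₁²Ry − N₀²), then M₀ = c₁, K₀ = N₀′,
L₀ = (c₂ − c₁N₀′)/N₀ satisfy all four zeroth-order virial-expansion
equations of the quotient of the Euler system. -/
theorem stmt13 (R ω c₁ c₂ c₃ : ℝ) (hR : 0 < R) (hω : 0 < ω) (hc₁ : c₁ ≠ 0)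
    (a b : ℝ) (N₀ : ℝ → ℝ)
    (hNdiff : ∀ y ∈ Set.Ioo a b, DifferentiableAt ℝ N₀ y)
    (hNdiff2 : ∀ y ∈ Set.Ioo a b, DifferentiableAt ℝ (deriv N₀) y)
    (hN0 : ∀ y ∈ Set.Ioo a b, N₀ y ≠ 0)
    (hden : ∀ y ∈ Set.Ioo a b, c₁ ^ 2 * R * y - N₀ y ^ 2 ≠ 0)
    (hODE : ∀ y ∈ Set.Ioo a b,
      deriv N₀ y = (c₁ * c₂ * R * y + (ω ^ 2 * y - c₃) * N₀ y)
        / (c₁ ^ 2 * R * y - N₀ y ^ 2))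
    (M₀ K₀ L₀ : ℝ → ℝ)
    (hM : ∀ y : ℝ, M₀ y = c₁)
    (hK : ∀ y : ℝ, K₀ y = deriv N₀ y)
    (hL : ∀ y : ℝ, L₀ y = (c₂ - c₁ * deriv N₀ y) / N₀ y) :
    ∀ y ∈ Set.Ioo a b,
      (M₀ y * deriv M₀ y = 0)
      ∧ (M₀ y * deriv N₀ y - N₀ y * deriv M₀ y - K₀ y * M₀ y = 0)
      ∧ ((L₀ y * N₀ y + M₀ y * K₀ y)
          * (N₀ y * deriv L₀ y + M₀ y * deriv K₀ y + K₀ y * L₀ y) = 0)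
      ∧ (R * M₀ y ^ 2 * (y * deriv L₀ y + deriv M₀ y + L₀ y)
          - deriv L₀ y * N₀ y ^ 2 + M₀ y * (K₀ y ^ 2 + ω ^ 2)
          - L₀ y * K₀ y * N₀ y = 0) := by
  intro y hy
  have hyI : Set.Ioo a b ∈ nhds y := isOpen_Ioo.mem_nhds hy
  have hM0 : M₀ = fun _ => c₁ := funext hM
  have hdM : deriv M₀ y = 0 := by rw [hM0]; simp
  have hK0 : K₀ = deriv N₀ := funext hK
  have hL0 : L₀ = fun z => (c₂ - c₁ * deriv N₀ z) / N₀ z := funext hL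
  have hn0 : N₀ y ≠ 0 := hN0 y hy
  have hD0 : c₁ ^ 2 * R * y - N₀ y ^ 2 ≠ 0 := hden y hy
  have hNd : DifferentiableAt ℝ N₀ y := hNdiff y hy
  have hNd2 : DifferentiableAt ℝ (deriv N₀) y := hNdiff2 y hy
  have hN' : HasDerivAt N₀ (deriv N₀ y) y := hNd.hasDerivAt
  have hN'' : HasDerivAt (deriv N₀) (deriv (deriv N₀) y) y := hNd2.hasDerivAt
  -- second derivative of N₀ from the ODE
  have hEq : deriv N₀ =ᶠ[nhds y]
      fun z => (c₁ * c₂ * R * z + (ω ^ 2 * z - c₃) * N₀ z)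
        / (c₁ ^ 2 * R * z - N₀ z ^ 2) :=
    Filter.eventually_of_mem hyI fun z hz => hODE z hz
  have hu : HasDerivAt (fun z => c₁ * c₂ * R * z + (ω ^ 2 * z - c₃) * N₀ z)
      (c₁ * c₂ * R + (ω ^ 2 * N₀ y + (ω ^ 2 * y - c₃) * deriv N₀ y)) y := by
    have h1 : HasDerivAt (fun z : ℝ => c₁ * c₂ * R * z) (c₁ * c₂ * R) y := by
      simpa using (hasDerivAt_id y).const_mul (c₁ * c₂ * R)
    have h2 : HasDerivAt (fun z : ℝ => ω ^ 2 * z - c₃) (ω ^ 2) y := by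
      simpa using ((hasDerivAt_id y).const_mul (ω ^ 2)).sub_const c₃
    have h3 := h2.mul hN'
    exact h1.add h3
  have hv : HasDerivAt (fun z => c₁ ^ 2 * R * z - N₀ z ^ 2)
      (c₁ ^ 2 * R - 2 * N₀ y * deriv N₀ y) y := by
    have h1 : HasDerivAt (fun z : ℝ => c₁ ^ 2 * R * z) (c₁ ^ 2 * R) y := by
      simpa using (hasDerivAt_id y).const_mul (c₁ ^ 2 * R)
    have h2 : HasDerivAt (fun z => N₀ z ^ 2) (2 * N₀ y * deriv N₀ y) y := by
      have := hN'.fun_pow 2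
      simpa [mul_comm, mul_assoc, mul_left_comm] using this
    exact h1.sub h2
  have hQval : deriv (deriv N₀) y =
      ((c₁ * c₂ * R + (ω ^ 2 * N₀ y + (ω ^ 2 * y - c₃) * deriv N₀ y))
          * (c₁ ^ 2 * R * y - N₀ y ^ 2)
        - (c₁ * c₂ * R * y + (ω ^ 2 * y - c₃) * N₀ y)
          * (c₁ ^ 2 * R - 2 * N₀ y * deriv N₀ y))
        / (c₁ ^ 2 * R * y - N₀ y ^ 2) ^ 2 := by
    rw [hEq.deriv_eq]
    exact (hu.div hv hD0).deriv
  -- derivative of L₀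
  have hdL : deriv L₀ y =
      ((-(c₁ * deriv (deriv N₀) y)) * N₀ y
        - (c₂ - c₁ * deriv N₀ y) * deriv N₀ y) / N₀ y ^ 2 := by
    rw [hL0]
    have hnum : HasDerivAt (fun z => c₂ - c₁ * deriv N₀ z)
        (-(c₁ * deriv (deriv N₀) y)) y := by
      simpa using (hN''.const_mul c₁).const_sub c₂
    exact (hnum.div hN' hn0).deriv
  have hP : deriv N₀ y = (c₁ * c₂ * R * y + (ω ^ 2 * y - c₃) * N₀ y)
      / (c₁ ^ 2 * R * y - N₀ y ^ 2) := hODE y hy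
  rw [hP] at hQval hdL
  refine ⟨?_, ?_, ?_, ?_⟩
  · rw [hM, hdM]; ring
  · rw [hM, hK, hdM]; ring
  · rw [hL, hM, hK0, hdL, hQval, hP]
    field_simp
    ring
  · rw [hL, hM, hK0, hdL, hdM, hQval, hP]
    have hD0' : R * c₁ ^ 2 * y - N₀ y ^ 2 ≠ 0 := by rwa [mul_comm R (c₁ ^ 2)]
    field_simp
    ring
end
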